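/- arXiv:2011.15101 — 6 statements merged into one kernel-verified Lean document; each statement's English description precedes it below -/
import Mathlib

section
/- Let $\mathcal{M}_i = (S_i, \mathcal{I}_i)$, $1 \le i \le p$, be matroids representable over a common field $\mathbb{F}$, and let $\mathcal{M} = \mathcal{M}_1 \oplus \cdots \oplus \mathcal{M}_p$ be their direct sum. Let $\mathcal{J}$ be any collection of transversal sets (sets containing exactly one element from each $S_i$). Then there exists $\mathcal{J}^* \subseteq \mathcal{J}$ with $|\mathcal{J}^*| \le \prod_{i=1}^p \mathrm{rank}(\mathcal{M}_i)$ such that for every $Y \subseteq S_1 \sqcup \cdots \sqcup S_p$: if some $X \in \mathcal{J}$ is disjoint from $Y$ with $X \cup Y$ independent in $\mathcal{M}$, then some $X^* \in \mathcal{J}^*$ is disjoint from $Y$ with $X^* \cup Y$ independent in $\mathcal{M}$. -/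
open Submodule Module
open scoped TensorProduct

lemma tprod_mem_span {F : Type*} [Field F] {p : ℕ} {W : Fin p → Type*}
    [∀ i, AddCommGroup (W i)] [∀ i, Module F (W i)]
    {κ : Fin p → Type*} [∀ i, Fintype (κ i)]
    (e : (i : Fin p) → κ i → W i) (m : (i : Fin p) → W i)
    (hm : ∀ i, m i ∈ Submodule.span F (Set.range (e i))) :
    PiTensorProduct.tprod F m ∈
      Submodule.span F (Set.range fun k : (i : Fin p) → κ i =>
        PiTensorProduct.tprod F fun i => e i (k i)) := by
  have hc : ∀ i, ∃ c : κ i → F, ∑ j, c j • e i j = m i := fun i =>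
    (mem_span_range_iff_exists_fun F).1 (hm i)
  choose c hc using hc
  have hmeq : m = fun i => ∑ j, c i j • e i j := funext fun i => (hc i).symm
  rw [hmeq, MultilinearMap.map_sum]
  refine Submodule.sum_mem _ fun k _ => ?_
  rw [MultilinearMap.map_smul_univ]
  exact Submodule.smul_mem _ _ (Submodule.subset_span ⟨k, rfl⟩)

/-- Independence, in the matroid represented by `v : S → W`, of the finite set `X`. -/
def RepIndep {F : Type*} [Field F] {S W : Type*} [AddCommGroup W] [Module F W]
    (v : S → W) (X : Finset S) : Prop :=
  LinearIndependent F (fun x : X => v x.1)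

lemma repIndep_insert_iff {F : Type*} [Field F] {S W : Type*} [DecidableEq S] [AddCommGroup W] [Module F W]
    (v : S → W) {a : S} {Y : Finset S} (ha : a ∉ Y) :
    RepIndep (F := F) v (insert a Y) ↔
      (LinearIndependent F fun x : (Y : Set S) => v x) ∧
        v a ∉ Submodule.span F (v '' (Y : Set S)) := by
  have h1 : RepIndep (F := F) v (insert a Y) ↔
      LinearIndependent F fun x : ((insert a Y : Finset S) : Set S) => v x := Iff.rfl
  rw [h1, Finset.coe_insert]
  exact linearIndepOn_insert (by simpa using ha)

/-- representative sets for direct sums of representable matroids.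
The matroids `ℳᵢ` are given by representations `v i : S i → W i`; a subset of the disjoint
union `⨆ᵢ Sᵢ` is described by its fibers `Y i : Finset (S i)`, and it is independent in the
direct sum iff each fiber is independent in `ℳᵢ`.  For any family `𝒥` of transversal sets
(one element from each `Sᵢ`, encoded as functions `X : Π i, S i`) there is a subfamily
`𝒥* ⊆ 𝒥` with `|𝒥*| ≤ ∏ᵢ rank ℳᵢ` such that whenever some `X ∈ 𝒥` is disjoint from `Y`
with `X ∪ Y` independent in the direct sum, some `X* ∈ 𝒥*` is disjoint from `Y` with
`X* ∪ Y` independent. -/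
theorem stmt2 {F : Type*} [Field F] {p : ℕ} {S : Fin p → Type*} [∀ i, DecidableEq (S i)]
    {W : Fin p → Type*} [∀ i, AddCommGroup (W i)] [∀ i, Module F (W i)]
    [∀ i, FiniteDimensional F (W i)]
    (v : (i : Fin p) → S i → W i)
    (J : Finset ((i : Fin p) → S i)) :
    ∃ Jstar ⊆ J, Jstar.card ≤ ∏ i, Set.finrank F (Set.range (v i)) ∧
      ∀ Y : (i : Fin p) → Finset (S i),
        (∃ X ∈ J, (∀ i, X i ∉ Y i) ∧ ∀ i, RepIndep (F := F) (v i) (insert (X i) (Y i))) →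
        (∃ Xstar ∈ Jstar, (∀ i, Xstar i ∉ Y i) ∧
          ∀ i, RepIndep (F := F) (v i) (insert (Xstar i) (Y i))) := by
  classical
  rcases J.eq_empty_or_nonempty with hJe | ⟨X₀, hX₀⟩
  · refine ⟨∅, by simp, by simp, ?_⟩
    rintro Y ⟨X, hXJ, -⟩
    simp [hJe] at hXJ
  haveI : Inhabited ((i : Fin p) → S i) := ⟨X₀⟩
  set R : (i : Fin p) → Submodule F (W i) := fun i => Submodule.span F (Set.range (v i)) with hR
  set w : ((i : Fin p) → S i) → (⨂[F] i, W i) :=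
    (fun X => PiTensorProduct.tprod F fun i => v i (X i)) with hw
  set e : (i : Fin p) → Fin (finrank F (R i)) → W i :=
    (fun i j => ((Module.finBasis F (R i)) j : W i)) with he
  have hespan : ∀ i, Submodule.span F (Set.range (e i)) = R i := by
    intro i
    have : Set.range (e i) = (R i).subtype '' Set.range (Module.finBasis F (R i)) := by
      rw [← Set.range_comp]; rfl
    rw [this, Submodule.span_image, Basis.span_eq, Submodule.map_top, Submodule.range_subtype]
  set T : Finset (⨂[F] i, W i) :=
    Finset.univ.image (fun k : (i : Fin p) → Fin (finrank F (R i)) =>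
      PiTensorProduct.tprod F fun i => e i (k i)) with hT
  have hwT : ∀ X : (i : Fin p) → S i, w X ∈ Submodule.span F (T : Set (⨂[F] i, W i)) := by
    intro X
    have hmem : ∀ i, v i (X i) ∈ Submodule.span F (Set.range (e i)) := by
      intro i; rw [hespan i]; exact Submodule.subset_span (Set.mem_range_self _)
    refine Submodule.span_mono ?_ (tprod_mem_span e (fun i => v i (X i)) hmem)
    rintro u ⟨k, rfl⟩
    exact Finset.mem_coe.2 (Finset.mem_image.2 ⟨k, Finset.mem_univ _, rfl⟩)
  haveI : FiniteDimensional F (Submodule.span F (T : Set (⨂[F] i, W i))) :=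
    FiniteDimensional.span_of_finite F T.finite_toSet
  obtain ⟨b, hbsub, hbspan, hbindep⟩ := exists_linearIndependent F (w '' (J : Set ((i : Fin p) → S i)))
  have hbfin : b.Finite := (J.finite_toSet.image w).subset hbsub
  set bF : Finset (⨂[F] i, W i) := hbfin.toFinset with hbF
  have hcoe : (bF : Set (⨂[F] i, W i)) = b := hbfin.coe_toFinset
  have hcard : bF.card ≤ ∏ i, Set.finrank F (Set.range (v i)) := by
    have h1 : finrank F (Submodule.span F (bF : Set (⨂[F] i, W i))) = bF.card := by
      apply finrank_span_finset_eq_card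
      have : ∀ (c : Set (⨂[F] i, W i)) (h : c = b),
          LinearIndependent F (Subtype.val : c → (⨂[F] i, W i)) := by
        rintro c rfl; exact hbindep
      exact this _ hcoe
    have h2 : Submodule.span F (bF : Set (⨂[F] i, W i)) ≤ Submodule.span F (T : Set (⨂[F] i, W i)) := by
      rw [hcoe, hbspan]
      refine Submodule.span_le.2 ?_
      rintro u ⟨X, hX, rfl⟩
      exact hwT X
    have h3 : finrank F (Submodule.span F (T : Set (⨂[F] i, W i))) ≤ T.card :=
      finrank_span_finset_le_card T
    have h4 : T.card ≤ ∏ i, Set.finrank F (Set.range (v i)) := by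
      refine (Finset.card_image_le).trans ?_
      rw [Finset.card_univ, Fintype.card_pi]
      simp [Set.finrank, hR]
      exact le_rfl
    calc bF.card = finrank F (Submodule.span F (bF : Set (⨂[F] i, W i))) := h1.symm
      _ ≤ finrank F (Submodule.span F (T : Set (⨂[F] i, W i))) := Submodule.finrank_mono h2
      _ ≤ _ := h3.trans h4
  have hpick : ∀ u ∈ b, ∃ X, X ∈ J ∧ w X = u := by
    intro u hu
    obtain ⟨X, hX, rfl⟩ := hbsub hu
    exact ⟨X, Finset.mem_coe.1 hX, rfl⟩
  choose! g hg1 hg2 using hpick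
  refine ⟨bF.image g, ?_, ?_, ?_⟩
  · intro X hX
    obtain ⟨u, hu, rfl⟩ := Finset.mem_image.1 hX
    exact hg1 u (hbfin.mem_toFinset.1 hu)
  · exact (Finset.card_image_le).trans hcard
  · rintro Y ⟨X, hXJ, hXY, hXind⟩
    have hsplit : ∀ i, (LinearIndependent F fun x : ((Y i : Set (S i))) => v i x) ∧
        v i (X i) ∉ Submodule.span F (v i '' (Y i : Set (S i))) := fun i =>
      (repIndep_insert_iff (v i) (hXY i)).1 (hXind i)
    have hphi : ∀ i, ∃ φ : W i →ₗ[F] F,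
        (∀ u ∈ Submodule.span F (v i '' (Y i : Set (S i))), φ u = 0) ∧ φ (v i (X i)) ≠ 0 := by
      intro i
      set U := Submodule.span F (v i '' (Y i : Set (S i))) with hU
      have hq : U.mkQ (v i (X i)) ≠ 0 := by
        rw [Submodule.mkQ_apply, Ne, Submodule.Quotient.mk_eq_zero]
        exact (hsplit i).2
      obtain ⟨ψ, hψ⟩ : ∃ ψ : Module.Dual F (W i ⧸ U), ψ (U.mkQ (v i (X i))) ≠ 0 := by
        by_contra hcon
        push_neg at hcon
        exact hq ((Module.forall_dual_apply_eq_zero_iff F _).1 hcon)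
      refine ⟨ψ.comp U.mkQ, ?_, hψ⟩
      intro u hu
      have : U.mkQ u = 0 := by rw [Submodule.mkQ_apply, Submodule.Quotient.mk_eq_zero]; exact hu
      simp [this]
    choose φ hφ0 hφX using hphi
    set Φ : (⨂[F] i, W i) →ₗ[F] F :=
      PiTensorProduct.lift ((MultilinearMap.mkPiAlgebra F (Fin p) F).compLinearMap φ) with hΦ
    have hΦw : ∀ Z : (i : Fin p) → S i, Φ (w Z) = ∏ i, φ i (v i (Z i)) := by
      intro Z
      simp [hΦ, hw]
    have hΦX : Φ (w X) ≠ 0 := by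
      rw [hΦw]
      exact Finset.prod_ne_zero_iff.2 fun i _ => hφX i
    have hsub2 : b ⊆ w '' ((bF.image g : Finset ((i : Fin p) → S i)) : Set ((i : Fin p) → S i)) := by
      intro u hu
      exact ⟨g u, Finset.mem_coe.2 (Finset.mem_image.2 ⟨u, hbfin.mem_toFinset.2 hu, rfl⟩), hg2 u hu⟩
    have hwmem : w X ∈ Submodule.span F (w '' ((bF.image g : Finset ((i : Fin p) → S i)) : Set ((i : Fin p) → S i))) := by
      have h1 : w X ∈ Submodule.span F (w '' (J : Set ((i : Fin p) → S i))) :=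
        Submodule.subset_span ⟨X, Finset.mem_coe.2 hXJ, rfl⟩
      rw [← hbspan] at h1
      exact Submodule.span_mono hsub2 h1
    have hexists : ∃ Xs ∈ bF.image g, Φ (w Xs) ≠ 0 := by
      by_contra hcon
      push_neg at hcon
      have hker : Submodule.span F (w '' ((bF.image g : Finset ((i : Fin p) → S i)) : Set ((i : Fin p) → S i))) ≤ LinearMap.ker Φ := by
        refine Submodule.span_le.2 ?_
        rintro u ⟨Z, hZ, rfl⟩
        exact LinearMap.mem_ker.2 (hcon Z (Finset.mem_coe.1 hZ))
      exact hΦX (LinearMap.mem_ker.1 (hker hwmem))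
    obtain ⟨Xs, hXsJ, hXs⟩ := hexists
    have hfac : ∀ i, φ i (v i (Xs i)) ≠ 0 := by
      rw [hΦw] at hXs
      exact fun i => Finset.prod_ne_zero_iff.1 hXs i (Finset.mem_univ _)
    have hnot : ∀ i, v i (Xs i) ∉ Submodule.span F (v i '' (Y i : Set (S i))) :=
      fun i h => hfac i (hφ0 i _ h)
    have hnotY : ∀ i, Xs i ∉ Y i := by
      intro i hmem
      exact hnot i (Submodule.subset_span ⟨Xs i, by simpa using hmem, rfl⟩)
    refine ⟨Xs, hXsJ, hnotY, fun i => ?_⟩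
    exact (repIndep_insert_iff (v i) (hnotY i)).2 ⟨(hsplit i).1, hnot i⟩
end

section
/- Given a bipartite graph $G = (A, B)$, the pair $(B, \mathcal{I})$, where $X \subseteq B$ is in $\mathcal{I}$ iff there is a matching in $G$ covering $X$, is a matroid (the transversal matroid). -/
open Set Function

namespace Stmt4Aux

variable {A B : Type*}

/-- The "step" condition: `b` is matched by `g` and its `g`-partner is used by `f`. -/
def Cnd (f g : B → A) (I J : Set B) (b : B) : Prop :=
  b ∈ J ∧ ∃ x, x ∈ I ∧ f x = g b

open Classical in
/-- One step along an alternating path. -/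
noncomputable def tnext (f g : B → A) (I J : Set B) (b : B) : B :=
  if h : Cnd f g I J b then h.2.choose else b

variable {f g : B → A} {I J : Set B}

lemma tnext_spec {b : B} (h : Cnd f g I J b) :
    tnext f g I J b ∈ I ∧ f (tnext f g I J b) = g b := by
  classical
  rw [tnext]
  rw [dif_pos h]
  exact ⟨h.2.choose_spec.1, h.2.choose_spec.2⟩

lemma tnext_eq {b : B} (h : ¬ Cnd f g I J b) : tnext f g I J b = b := by
  classical
  rw [tnext, dif_neg h]

lemma peel1 (hg : InjOn g J) {b b' : B} (hb : Cnd f g I J b) (hb' : Cnd f g I J b')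
    (h : tnext f g I J b = tnext f g I J b') : b = b' := by
  have e1 := (tnext_spec hb).2
  have e2 := (tnext_spec hb').2
  rw [h, e2] at e1
  exact (hg hb'.1 hb.1 e1).symm

/-- At a fixed point reached from `y ∉ I`, the condition fails. -/
lemma claimA (hg : InjOn g J) {y : B} (hy : y ∉ I) :
    ∀ i, (tnext f g I J)^[i+1] y = (tnext f g I J)^[i] y →
      ¬ Cnd f g I J ((tnext f g I J)^[i] y) := by
  intro i
  induction i with
  | zero =>
    intro hfix hc
    simp only [Function.iterate_one, Function.iterate_zero, id_eq] at hfix hc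
    have := (tnext_spec hc).1
    rw [show tnext f g I J y = y from by simpa using hfix] at this
    exact hy this
  | succ i ih =>
    intro hfix hc
    have hb : (tnext f g I J)^[i+1] y = tnext f g I J ((tnext f g I J)^[i] y) :=
      Function.iterate_succ_apply' _ _ _
    have hfb : f ((tnext f g I J)^[i+1] y) = g ((tnext f g I J)^[i+1] y) := by
      have := (tnext_spec hc).2
      rw [← Function.iterate_succ_apply' (tnext f g I J) (i+1) y] at this
      rwa [hfix] at this
    have hpb : (tnext f g I J)^[i] y = (tnext f g I J)^[i+1] y := by
      by_cases hcp : Cnd f g I J ((tnext f g I J)^[i] y)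
      · have e := (tnext_spec hcp).2
        rw [← hb, hfb] at e
        exact hg hcp.1 hc.1 e.symm
      · rw [hb, tnext_eq hcp]
    exact ih hpb.symm (hpb ▸ hc)

/-- Peeling back along two trajectories from points outside `I`. -/
lemma peelBack (hg : InjOn g J) :
    ∀ (k : ℕ) {k' : ℕ} {y y' : B}, y ∉ I → y' ∉ I →
      (∀ i < k, Cnd f g I J ((tnext f g I J)^[i] y)) →
      (∀ i < k', Cnd f g I J ((tnext f g I J)^[i] y')) →
      (tnext f g I J)^[k] y = (tnext f g I J)^[k'] y' → y = y' ∧ k = k' := by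
  intro k
  induction k with
  | zero =>
    intro k' y y' hy hy' _ hcy' h
    match k' with
    | 0 => exact ⟨by simpa using h, rfl⟩
    | k'' + 1 =>
      exfalso
      have hc := hcy' k'' (Nat.lt_succ_self _)
      have hmem : (tnext f g I J)^[k''+1] y' ∈ I := by
        rw [Function.iterate_succ_apply']
        exact (tnext_spec hc).1
      rw [← h] at hmem
      simp only [Function.iterate_zero, id_eq] at hmem
      exact hy hmem
  | succ k ih =>
    intro k' y y' hy hy' hcy hcy' h
    match k' with
    | 0 =>
      exfalso
      have hc := hcy k (Nat.lt_succ_self _)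
      have hmem : (tnext f g I J)^[k+1] y ∈ I := by
        rw [Function.iterate_succ_apply']
        exact (tnext_spec hc).1
      rw [h] at hmem
      simp only [Function.iterate_zero, id_eq] at hmem
      exact hy' hmem
    | k'' + 1 =>
      have hc1 := hcy k (Nat.lt_succ_self _)
      have hc2 := hcy' k'' (Nat.lt_succ_self _)
      rw [Function.iterate_succ_apply', Function.iterate_succ_apply'] at h
      have hpk := peel1 hg hc1 hc2 h
      obtain ⟨h1, h2⟩ := ih hy hy' (fun i hi => hcy i (hi.trans (Nat.lt_succ_self _)))
        (fun i hi => hcy' i (hi.trans (Nat.lt_succ_self _))) hpk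
      exact ⟨h1, by rw [h2]⟩

/-- From `y ∉ I`, the trajectory reaches a fixed point. -/
lemma existsFix [Finite B] (hg : InjOn g J) {y : B} (hy : y ∉ I) :
    ∃ k, (tnext f g I J)^[k+1] y = (tnext f g I J)^[k] y := by
  by_contra hno
  push_neg at hno
  have hcond : ∀ k, Cnd f g I J ((tnext f g I J)^[k] y) := by
    intro k
    by_contra hc
    exact hno k (by rw [Function.iterate_succ_apply', tnext_eq hc])
  have hinj : Function.Injective (fun i => (tnext f g I J)^[i] y) := by
    intro i j hij
    exact (peelBack hg i hy hy (fun l _ => hcond l) (fun l _ => hcond l) hij).2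
  obtain ⟨i, j, hne, heq⟩ := Finite.exists_ne_map_eq_of_infinite (fun i => (tnext f g I J)^[i] y)
  exact hne (hinj heq)


/-- Key dichotomy: either an augmenting path exists, or we can inject `J \ I` into `I \ J`. -/
lemma key [Finite B] (_hfI : InjOn f I) (hgJ : InjOn g J) (hIJ : I.ncard < J.ncard) :
    ∃ y ∈ J, y ∉ I ∧ ∃ n : ℕ,
      (∀ i < n, (tnext f g I J)^[i] y ∈ J ∧ (tnext f g I J)^[i+1] y ∈ I ∧
        f ((tnext f g I J)^[i+1] y) = g ((tnext f g I J)^[i] y)) ∧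
      (tnext f g I J)^[n] y ∈ J ∧ ∀ x ∈ I, f x ≠ g ((tnext f g I J)^[n] y) := by
  classical
  by_contra hno
  push_neg at hno
  -- every y ∈ J \ I leads to a dead end, giving an injection J \ I → I \ J
  have hdead : ∀ y ∈ J \ I,
      ∃ k, (tnext f g I J)^[k+1] y = (tnext f g I J)^[k] y ∧
        (∀ i < k, Cnd f g I J ((tnext f g I J)^[i] y)) ∧
        (tnext f g I J)^[k] y ∈ I \ J := by
    intro y hy
    obtain ⟨hyJ, hyI⟩ := hy
    have hex := existsFix (f := f) (I := I) hgJ hyI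
    set k := Nat.find hex with hk
    have hfix : (tnext f g I J)^[k+1] y = (tnext f g I J)^[k] y := Nat.find_spec hex
    have hcond : ∀ i < k, Cnd f g I J ((tnext f g I J)^[i] y) := by
      intro i hi
      by_contra hc
      exact Nat.find_min hex hi (by rw [Function.iterate_succ_apply', tnext_eq hc])
    have hnc : ¬ Cnd f g I J ((tnext f g I J)^[k] y) := claimA hgJ hyI k hfix
    -- if the endpoint is in J, we have an augmenting path, contradiction
    have hnJ : (tnext f g I J)^[k] y ∉ J := by
      intro hJend
      have hex2 := hno y hyJ hyI k (fun i hi => ⟨(hcond i hi).1,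
        by rw [Function.iterate_succ_apply']; exact (tnext_spec (hcond i hi)).1,
        by rw [Function.iterate_succ_apply']; exact (tnext_spec (hcond i hi)).2⟩) hJend
      obtain ⟨x, hx, hfx⟩ := hex2
      exact hnc ⟨hJend, x, hx, hfx⟩
    have hkpos : k ≠ 0 := by
      intro h0
      rw [h0] at hnJ
      simp only [Function.iterate_zero, id_eq] at hnJ
      exact hnJ hyJ
    have hmemI : (tnext f g I J)^[k] y ∈ I := by
      obtain ⟨k', hk'⟩ := Nat.exists_eq_succ_of_ne_zero hkpos
      rw [hk', Function.iterate_succ_apply']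
      exact (tnext_spec (hcond k' (by omega))).1
    exact ⟨k, hfix, hcond, hmemI, hnJ⟩
  -- define the dead-end map
  choose dk hdk1 hdk2 hdk3 using hdead
  set d : B → B := fun y => if h : y ∈ J \ I then (tnext f g I J)^[dk y h] y else y with hd
  have hdmap : ∀ y ∈ J \ I, d y ∈ I \ J := by
    intro y hy
    simp only [hd, dif_pos hy]
    exact hdk3 y hy
  have hdinj : InjOn d (J \ I) := by
    intro y hy y' hy' hdy
    simp only [hd, dif_pos hy, dif_pos hy'] at hdy
    exact (peelBack hgJ (dk y hy) hy.2 hy'.2 (hdk2 y hy) (hdk2 y' hy') hdy).1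
  have hfinI : (I \ J).Finite := Set.toFinite _
  have hle : (J \ I).ncard ≤ (I \ J).ncard :=
    Set.ncard_le_ncard_of_injOn d hdmap hdinj hfinI
  have h1 := Set.encard_diff_add_encard_inter J I
  have h2 := Set.encard_diff_add_encard_inter I J
  have hfin : ∀ s : Set B, s.encard = (s.ncard : ℕ∞) := fun s => ((Set.toFinite s).cast_ncard_eq).symm
  rw [hfin, hfin, hfin] at h1 h2
  rw [Set.inter_comm J I] at h1
  have h1' : (J \ I).ncard + (I ∩ J).ncard = J.ncard := by exact_mod_cast h1
  have h2' : (I \ J).ncard + (I ∩ J).ncard = I.ncard := by exact_mod_cast h2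
  omega

/-- The augmentation property for transversal "independence". -/
lemma aug [Finite B] {adj : A → B → Prop}
    (hfI : InjOn f I) (hfadj : ∀ x ∈ I, adj (f x) x)
    (hgJ : InjOn g J) (hgadj : ∀ x ∈ J, adj (g x) x)
    (hIJ : I.ncard < J.ncard) :
    ∃ e ∈ J, e ∉ I ∧ ∃ h : B → A, InjOn h (insert e I) ∧ ∀ x ∈ insert e I, adj (h x) x := by
  classical
  obtain ⟨y, hyJ, hyI, n, hpath, hnJ, hfar⟩ := key hfI hgJ hIJ
  set P : B → Prop := fun b => ∃ i ≤ n, (tnext f g I J)^[i] y = b with hP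
  have hyP : P y := ⟨0, Nat.zero_le _, rfl⟩
  have honJ : ∀ b, P b → b ∈ J := by
    rintro b ⟨i, hin, rfl⟩
    rcases Nat.lt_or_ge i n with h | h
    · exact (hpath i h).1
    · have : i = n := le_antisymm hin h
      subst this; exact hnJ
  have hoffI : ∀ b ∈ insert y I, ¬ P b → b ∈ I := by
    intro b hb hnb
    rcases hb with rfl | h
    · exact absurd hyP hnb
    · exact h
  refine ⟨y, hyJ, hyI, fun b => if P b then g b else f b, ?_, ?_⟩
  · intro b hb b' hb' hbb'
    by_cases h1 : P b <;> by_cases h2 : P b'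
    · simp only [if_pos h1, if_pos h2] at hbb'
      exact hgJ (honJ b h1) (honJ b' h2) hbb'
    · exfalso
      simp only [if_pos h1, if_neg h2] at hbb'
      have hb'I : b' ∈ I := hoffI b' hb' h2
      obtain ⟨i, hin, rfl⟩ := h1
      rcases Nat.lt_or_ge i n with h | h
      · have he := (hpath i h).2.2
        rw [hbb'] at he
        have := hfI (hpath i h).2.1 hb'I he
        exact h2 ⟨i+1, h, this⟩
      · have hieq : i = n := le_antisymm hin h
        subst hieq
        exact hfar b' hb'I hbb'.symm
    · exfalso
      simp only [if_neg h1, if_pos h2] at hbb'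
      have hbI : b ∈ I := hoffI b hb h1
      obtain ⟨i, hin, rfl⟩ := h2
      rcases Nat.lt_or_ge i n with h | h
      · have he := (hpath i h).2.2
        rw [← hbb'] at he
        have := hfI (hpath i h).2.1 hbI he
        exact h1 ⟨i+1, h, this⟩
      · have hieq : i = n := le_antisymm hin h
        subst hieq
        exact hfar b hbI hbb'
    · simp only [if_neg h1, if_neg h2] at hbb'
      exact hfI (hoffI b hb h1) (hoffI b' hb' h2) hbb'
  · intro b hb
    by_cases h1 : P b
    · simp only [if_pos h1]; exact hgadj b (honJ b h1)
    · simp only [if_neg h1]; exact hfadj b (hoffI b hb h1)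

end Stmt4Aux

/-- given a (finite) bipartite graph with sides `A`, `B` and adjacency
relation `adj`, there is a matroid on `B` whose independent sets are exactly the subsets
`X ⊆ B` covered by some matching (equivalently, the sets admitting an injection `f` into
`A` with `f x` adjacent to `x` for all `x ∈ X`): the transversal matroid. -/
theorem stmt4 {A B : Type*} [Fintype A] [Fintype B] (adj : A → B → Prop) :
    ∃ M : Matroid B, M.E = Set.univ ∧
      ∀ X : Set B, M.Indep X ↔
        ∃ f : X → A, Function.Injective f ∧ ∀ x : X, adj (f x) x.1 := by
  classical
  by_cases hA : Nonempty A
  case neg =>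
    -- A is empty: only the empty set is independent
    refine ⟨Matroid.loopyOn Set.univ, rfl, fun X => ?_⟩
    rw [Matroid.loopyOn_indep_iff]
    constructor
    · rintro rfl
      exact ⟨fun x => absurd x.2 (Set.notMem_empty _), fun x => absurd x.2 (Set.notMem_empty _),
        fun x => absurd x.2 (Set.notMem_empty _)⟩
    · rintro ⟨f, -, -⟩
      by_contra hne
      obtain ⟨x, hx⟩ := Set.nonempty_iff_ne_empty.2 hne
      exact hA ⟨f ⟨x, hx⟩⟩
  case pos =>
    set Ind : Set B → Prop := fun X => ∃ f : B → A, Set.InjOn f X ∧ ∀ x ∈ X, adj (f x) x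
      with hInd
    have hEquiv : ∀ X : Set B, Ind X ↔
        ∃ f : X → A, Function.Injective f ∧ ∀ x : X, adj (f x) x.1 := by
      intro X
      constructor
      · rintro ⟨f, hinj, hadj⟩
        refine ⟨fun x => f x.1, fun x x' h => Subtype.ext (hinj x.2 x'.2 h), fun x => hadj x.1 x.2⟩
      · rintro ⟨f, hinj, hadj⟩
        refine ⟨fun b => if h : b ∈ X then f ⟨b, h⟩ else Classical.arbitrary A, ?_, ?_⟩
        · intro b hb b' hb' h
          simp only [dif_pos hb, dif_pos hb'] at h
          exact congrArg Subtype.val (hinj h)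
        · intro b hb
          simp only [dif_pos hb]
          exact hadj ⟨b, hb⟩
    refine ⟨(IndepMatroid.ofFinite Set.finite_univ Ind ?_ ?_ ?_ ?_).matroid, rfl, fun X => ?_⟩
    · exact ⟨fun _ => Classical.arbitrary A, fun x hx => absurd hx (Set.notMem_empty _),
        fun x hx => absurd hx (Set.notMem_empty _)⟩
    · rintro I J ⟨f, hinj, hadj⟩ hIJ
      exact ⟨f, hinj.mono hIJ, fun x hx => hadj x (hIJ hx)⟩
    · rintro I J ⟨f, hfinj, hfadj⟩ ⟨g, hginj, hgadj⟩ hlt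
      obtain ⟨e, heJ, heI, h, hinj, hadj⟩ := Stmt4Aux.aug hfinj hfadj hginj hgadj hlt
      exact ⟨e, heJ, heI, h, hinj, hadj⟩
    · exact fun I _ => Set.subset_univ I
    · rw [IndepMatroid.matroid_indep_iff, IndepMatroid.ofFinite_indep]
      exact hEquiv X
end

section
/- In a directed graph $G$ with disjoint vertex sets $A$ and $B$, if $C$ is a minimum vertex cut between $A$ and $B$ of size $k$, then there exist $k$ vertex-disjoint paths from $A$ to $C$ (each path ending at a distinct vertex of $C$), and $k$ vertex-disjoint paths from $C$ to $B$. -/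
/-- `b` is reachable from `a` by a directed path avoiding the vertex set `C`. -/
def Reaches {V : Type*} (adj : V → V → Prop) (C : Finset V) (a b : V) : Prop :=
  Relation.ReflTransGen (fun u v => adj u v ∧ u ∉ C ∧ v ∉ C) a b

/-- `C` is a vertex cut between `A` and `B`: no directed path from `A` to `B` survives the
removal of `C` (note that `C` may intersect `A ∪ B`). -/
def IsVertexCut {V : Type*} (adj : V → V → Prop) (A B C : Finset V) : Prop :=
  ∀ a ∈ A, ∀ b ∈ B, a ∉ C → b ∉ C → ¬ Reaches adj C a b

/-- `P` is a (simple, directed) path starting in `S` and ending in `T`. -/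
def IsPathFrom {V : Type*} (adj : V → V → Prop) (S T : Finset V) (P : List V) : Prop :=
  P ≠ [] ∧ P.Chain' adj ∧ P.Nodup ∧
    (∃ a ∈ S, P.head? = some a) ∧ ∃ b ∈ T, P.getLast? = some b

/-- A family of pairwise vertex-disjoint paths. -/
def DisjointPaths {V : Type*} {m : ℕ} (Ps : Fin m → List V) : Prop :=
  ∀ i j, i ≠ j → (Ps i).Disjoint (Ps j)

namespace MengerAux
set_option linter.unusedSectionVars false
variable {V : Type*} [Fintype V] [DecidableEq V]

lemma reaches_mono {adj adj' : V → V → Prop} {C C' : Finset V} {a b : V}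
    (hadj : ∀ x y, adj x y → adj' x y) (hC : C' ⊆ C) (h : Reaches adj C a b) :
    Reaches adj' C' a b :=
  Relation.ReflTransGen.mono (fun x y ⟨h1, h2, h3⟩ =>
    ⟨hadj x y h1, fun hx => h2 (hC hx), fun hy => h3 (hC hy)⟩) _ _ h

/-- A chain list all of whose vertices avoid `S` gives a `Reaches`. -/
lemma path_reaches {adj : V → V → Prop} {S : Finset V} :
    ∀ (P : List V) {a c : V}, P.Chain' adj → (∀ y ∈ P, y ∉ S) →
      P.head? = some a → P.getLast? = some c → Reaches adj S a c := by
  intro P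
  induction P with
  | nil => intro a c _ _ h; simp at h
  | cons x t ih =>
    intro a c hch hav hh hl
    cases t with
    | nil =>
      simp at hh hl; subst hh; subst hl; exact Relation.ReflTransGen.refl
    | cons y t' =>
      simp only [List.head?_cons, Option.some_inj] at hh
      subst hh
      rw [List.Chain', List.isChain_cons_cons] at hch
      have hstep : adj x y ∧ x ∉ S ∧ y ∉ S :=
        ⟨hch.1, hav x (by simp), hav y (by simp)⟩
      have hrest : Reaches adj S y c := by
        refine ih hch.2 (fun z hz => hav z (by simp [hz])) rfl ?_
        rw [List.getLast?_cons_cons] at hl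
        exact hl
      exact Relation.ReflTransGen.head hstep hrest

/-- First-vertex-in-`D` decomposition of a reach. -/
lemma reach_first {adj : V → V → Prop} {C D : Finset V} {a b : V}
    (hb : b ∉ C) (h : Reaches adj C a b) :
    (a ∉ D ∧ b ∉ D ∧ Reaches adj (C ∪ D) a b) ∨
      ∃ c ∈ D, c ∉ C ∧
        Relation.ReflTransGen (fun x y => adj x y ∧ x ∉ C ∪ D ∧ y ∉ C) a c := by
  by_cases haD : a ∈ D
  · right
    refine ⟨a, haD, ?_, Relation.ReflTransGen.refl⟩
    rcases h.cases_head with h1 | ⟨c, ⟨_, h2, _⟩, _⟩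
    · exact h1 ▸ hb
    · exact h2
  · have main : ∀ {x : V}, Reaches adj C x b → x ∉ D →
        (b ∉ D ∧ Reaches adj (C ∪ D) x b) ∨
          ∃ c ∈ D, c ∉ C ∧
            Relation.ReflTransGen (fun x y => adj x y ∧ x ∉ C ∪ D ∧ y ∉ C) x c := by
      intro x hx
      induction hx using Relation.ReflTransGen.head_induction_on with
      | refl => intro hxD; exact Or.inl ⟨hxD, Relation.ReflTransGen.refl⟩
      | @head x y h' hrest ih =>
        intro hxD
        have hxCD : x ∉ C ∪ D := by
          simp only [Finset.mem_union]; push_neg; exact ⟨h'.2.1, hxD⟩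
        by_cases hyD : y ∈ D
        · exact Or.inr ⟨y, hyD, h'.2.2,
            Relation.ReflTransGen.single ⟨h'.1, hxCD, h'.2.2⟩⟩
        · have hyCD : y ∉ C ∪ D := by
            simp only [Finset.mem_union]; push_neg; exact ⟨h'.2.2, hyD⟩
          rcases ih hyD with ⟨hbD, hr⟩ | ⟨c, hc, hcC, hr⟩
          · exact Or.inl ⟨hbD, Relation.ReflTransGen.head ⟨h'.1, hxCD, hyCD⟩ hr⟩
          · exact Or.inr ⟨c, hc, hcC,
              Relation.ReflTransGen.head ⟨h'.1, hxCD, h'.2.2⟩ hr⟩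
    rcases main h haD with ⟨hbD, hr⟩ | hr
    · exact Or.inl ⟨haD, hbD, hr⟩
    · exact Or.inr hr

/-- Last-vertex-in-`D` decomposition of a reach. -/
lemma reach_last {adj : V → V → Prop} {C D : Finset V} {a b : V}
    (ha : a ∉ C) (h : Reaches adj C a b) :
    (a ∉ D ∧ b ∉ D ∧ Reaches adj (C ∪ D) a b) ∨
      ∃ c ∈ D, c ∉ C ∧
        Relation.ReflTransGen (fun x y => adj x y ∧ x ∉ C ∧ y ∉ C ∪ D) c b := by
  by_cases hbD : b ∈ D
  · right
    refine ⟨b, hbD, ?_, Relation.ReflTransGen.refl⟩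
    rcases h.cases_tail with h1 | ⟨c, _, ⟨_, _, h2⟩⟩
    · exact h1 ▸ ha
    · exact h2
  · have main : ∀ {x : V}, Reaches adj C a x → x ∉ D →
        (a ∉ D ∧ Reaches adj (C ∪ D) a x) ∨
          ∃ c ∈ D, c ∉ C ∧
            Relation.ReflTransGen (fun x y => adj x y ∧ x ∉ C ∧ y ∉ C ∪ D) c x := by
      intro x hx
      induction hx with
      | refl => intro hxD; exact Or.inl ⟨hxD, Relation.ReflTransGen.refl⟩
      | @tail y z hrest h' ih =>
        intro hzD
        have hzCD : z ∉ C ∪ D := by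
          simp only [Finset.mem_union]; push_neg; exact ⟨h'.2.2, hzD⟩
        by_cases hyD : y ∈ D
        · exact Or.inr ⟨y, hyD, h'.2.1,
            Relation.ReflTransGen.single ⟨h'.1, h'.2.1, hzCD⟩⟩
        · have hyCD : y ∉ C ∪ D := by
            simp only [Finset.mem_union]; push_neg; exact ⟨h'.2.1, hyD⟩
          rcases ih hyD with ⟨haD, hr⟩ | ⟨c, hc, hcC, hr⟩
          · exact Or.inl ⟨haD, Relation.ReflTransGen.tail hr ⟨h'.1, hyCD, hzCD⟩⟩
          · exact Or.inr ⟨c, hc, hcC,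
              Relation.ReflTransGen.tail hr ⟨h'.1, h'.2.1, hzCD⟩⟩
    rcases main h hbD with ⟨haD, hr⟩ | hr
    · exact Or.inl ⟨haD, hbD, hr⟩
    · exact Or.inr hr

lemma mem_of_getLast?' : ∀ {l : List V} {a : V}, l.getLast? = some a → a ∈ l := by
  intro l
  induction l with
  | nil => intro a h; simp at h
  | cons x t ih =>
    intro a h
    cases t with
    | nil => simp_all
    | cons y t' =>
      rw [List.getLast?_cons_cons] at h
      exact List.mem_cons_of_mem _ (ih h)

lemma mem_of_head?' {l : List V} {a : V} (h : l.head? = some a) : a ∈ l := by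
  cases l with
  | nil => simp at h
  | cons x t => simp at h; simp [h]

/-- split a list at the first element belonging to `D`. -/
lemma firstSplit {D : Finset V} :
    ∀ (P : List V), (∃ x ∈ P, x ∈ D) →
      ∃ P₁ c P₂, P = P₁ ++ c :: P₂ ∧ c ∈ D ∧ ∀ x ∈ P₁, x ∉ D := by
  intro P
  induction P with
  | nil => rintro ⟨x, hx, -⟩; simp at hx
  | cons y t ih =>
    intro hex
    by_cases hy : y ∈ D
    · exact ⟨[], y, t, rfl, hy, by simp⟩
    · obtain ⟨x, hx, hxD⟩ := hex
      have hxt : x ∈ t := by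
        rcases List.mem_cons.mp hx with rfl | h
        · exact absurd hxD hy
        · exact h
      obtain ⟨P₁, c, P₂, rfl, hc, hP₁⟩ := ih ⟨x, hxt, hxD⟩
      exact ⟨y :: P₁, c, P₂, rfl, hc, by
        intro z hz
        rcases List.mem_cons.mp hz with rfl | h
        · exact hy
        · exact hP₁ z h⟩

/-- split a list at the last element belonging to `D`. -/
lemma lastSplit {D : Finset V} :
    ∀ (P : List V), (∃ x ∈ P, x ∈ D) →
      ∃ P₁ c P₂, P = P₁ ++ c :: P₂ ∧ c ∈ D ∧ ∀ x ∈ P₂, x ∉ D := by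
  intro P
  induction P with
  | nil => rintro ⟨x, hx, -⟩; simp at hx
  | cons y t ih =>
    intro hex
    by_cases ht : ∃ x ∈ t, x ∈ D
    · obtain ⟨P₁, c, P₂, rfl, hc, hP₂⟩ := ih ht
      exact ⟨y :: P₁, c, P₂, rfl, hc, hP₂⟩
    · push_neg at ht
      have hy : y ∈ D := by
        obtain ⟨x, hx, hxD⟩ := hex
        rcases List.mem_cons.mp hx with rfl | h
        · exact hxD
        · exact absurd hxD (ht x h)
      exact ⟨[], y, t, rfl, hy, ht⟩

lemma head?_append_cons (l₁ : List V) (a : V) (l₂ l₃ : List V) :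
    (l₁ ++ a :: l₂).head? = (l₁ ++ a :: l₃).head? := by
  cases l₁ <;> simp

lemma mem_dropLast_of_ne_last {l : List V} {x b : V} (hx : x ∈ l)
    (hb : l.getLast? = some b) (hne : x ≠ b) : x ∈ l.dropLast := by
  have hl : l ≠ [] := by rintro rfl; simp at hx
  have := List.dropLast_append_getLast hl
  have hb' : l.getLast hl = b := by
    rw [List.getLast?_eq_getLast hl] at hb
    exact Option.some_injective _ hb
  rw [← this] at hx
  rcases List.mem_append.mp hx with h | h
  · exact h
  · simp [hb'] at h; exact absurd h hne

lemma mem_tail_of_ne_head {l : List V} {x a : V} (hx : x ∈ l)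
    (ha : l.head? = some a) (hne : x ≠ a) : x ∈ l.tail := by
  cases l with
  | nil => simp at hx
  | cons y t =>
    simp at ha
    rcases List.mem_cons.mp hx with rfl | h
    · exact absurd ha hne
    · exact h
lemma isPathFrom_mono {adj adj' : V → V → Prop} (hadj : ∀ x y, adj x y → adj' x y)
    {A B : Finset V} {P : List V} (h : IsPathFrom adj A B P) : IsPathFrom adj' A B P :=
  ⟨h.1, h.2.1.imp hadj, h.2.2⟩

lemma truncate_P {adj : V → V → Prop} {A D : Finset V} {P : List V}
    (h : IsPathFrom adj A D P) :
    ∃ P', IsPathFrom adj A D P' ∧ (∀ x ∈ P', x ∈ P) ∧ ∀ x ∈ P'.dropLast, x ∉ D := by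
  obtain ⟨hne, hch, hnd, ⟨a, haA, hha⟩, b, hbD, hlb⟩ := h
  obtain ⟨P₁, c, P₂, hsplit, hcD, hP₁⟩ :=
    firstSplit (D := D) P ⟨b, mem_of_getLast?' hlb, hbD⟩
  have hpre : (P₁ ++ [c]) <+: P := ⟨P₂, by simp [hsplit]⟩
  refine ⟨P₁ ++ [c], ⟨by simp, hch.prefix hpre, hnd.sublist hpre.sublist, ?_, ?_⟩,
    fun x hx => hpre.sublist.mem hx, ?_⟩
  · refine ⟨a, haA, ?_⟩
    rw [head?_append_cons P₁ c [] P₂, ← hsplit]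
    exact hha
  · exact ⟨c, hcD, by rw [List.getLast?_append_cons]; rfl⟩
  · rw [List.dropLast_concat]; exact hP₁

lemma truncate_Q {adj : V → V → Prop} {D B : Finset V} {Q : List V}
    (h : IsPathFrom adj D B Q) :
    ∃ Q', IsPathFrom adj D B Q' ∧ (∀ x ∈ Q', x ∈ Q) ∧ ∀ x ∈ Q'.tail, x ∉ D := by
  obtain ⟨hne, hch, hnd, ⟨a, haD, hha⟩, b, hbB, hlb⟩ := h
  have hamem : a ∈ Q := by
    cases Q with
    | nil => simp at hha
    | cons y t => simp at hha; simp [hha]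
  obtain ⟨Q₁, c, Q₂, hsplit, hcD, hQ₂⟩ := lastSplit (D := D) Q ⟨a, hamem, haD⟩
  have hsuf : (c :: Q₂) <:+ Q := ⟨Q₁, hsplit.symm⟩
  refine ⟨c :: Q₂, ⟨by simp, hch.suffix hsuf, hnd.sublist hsuf.sublist,
    ⟨c, hcD, rfl⟩, ⟨b, hbB, ?_⟩⟩, fun x hx => hsuf.sublist.mem hx, hQ₂⟩
  rw [← hlb, hsplit, List.getLast?_append_cons]
lemma head?_dropLast {l : List V} (h : l.dropLast ≠ []) :
    l.dropLast.head? = l.head? := by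
  cases l with
  | nil => rfl
  | cons y t =>
    cases t with
    | nil => simp at h
    | cons z t' => simp [List.dropLast_cons₂]

lemma walkP {adj' : V → V → Prop} {S Du : Finset V} {P : List V} {e x : V}
    (hSD : S ⊆ Du) (hch : P.Chain' adj') (hPe : P.getLast? = some e)
    (hPd : ∀ y ∈ P.dropLast, y ∉ Du) (hx : x ∈ P) (hxS : x ∉ S) :
    ∀ {a : V}, P.head? = some a → Reaches adj' S a x ∧ a ∉ S := by
  intro a hha
  by_cases hxe : x = e
  · subst hxe
    have hne : P ≠ [] := by rintro rfl; simp at hx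
    have hall : ∀ y ∈ P, y ∉ S := by
      intro y hy
      rw [← List.dropLast_append_getLast hne] at hy
      rcases List.mem_append.mp hy with h | h
      · exact fun hyS => hPd y h (hSD hyS)
      · simp only [List.mem_singleton] at h
        subst h
        have hgl : P.getLast hne = x := by
          rw [List.getLast?_eq_getLast hne] at hPe
          exact Option.some_injective _ hPe
        rw [hgl]; exact hxS
    exact ⟨path_reaches P hch hall hha hPe, hall a (mem_of_head?' hha)⟩
  · have hxd : x ∈ P.dropLast := mem_dropLast_of_ne_last hx hPe hxe
    obtain ⟨X₁, X₂, hXsplit⟩ := List.append_of_mem hxd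
    have hdne : P.dropLast ≠ [] := by rintro h; rw [h] at hxd; simp at hxd
    have hpre : (X₁ ++ [x]) <+: P :=
      List.IsPrefix.trans
        (⟨X₂, by rw [hXsplit]; simp⟩ : (X₁ ++ [x]) <+: P.dropLast)
        (List.dropLast_prefix P)
    have hmemW : ∀ y ∈ X₁ ++ [x], y ∈ P.dropLast := by
      intro y hy
      rw [hXsplit]
      rcases List.mem_append.mp hy with h | h
      · exact List.mem_append_left _ h
      · simp only [List.mem_singleton] at h; subst h; simp
    have hallW : ∀ y ∈ X₁ ++ [x], y ∉ S := fun y hy hyS => hPd y (hmemW y hy) (hSD hyS)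
    have hheadW : (X₁ ++ [x]).head? = some a := by
      rw [head?_append_cons X₁ x [] X₂, ← hXsplit, head?_dropLast hdne]
      exact hha
    have hlastW : (X₁ ++ [x]).getLast? = some x := by
      rw [List.getLast?_append_cons]; rfl
    exact ⟨path_reaches _ (hch.prefix hpre) hallW hheadW hlastW,
      hallW a (mem_of_head?' hheadW)⟩

lemma walkQ {adj' : V → V → Prop} {S Dv : Finset V} {Q : List V} {f x : V}
    (hSD : S ⊆ Dv) (hch : Q.Chain' adj') (hQf : Q.head? = some f)
    (hQt : ∀ y ∈ Q.tail, y ∉ Dv) (hx : x ∈ Q) (hxS : x ∉ S) :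
    ∀ {b : V}, Q.getLast? = some b → Reaches adj' S x b ∧ b ∉ S := by
  intro b hlb
  have hQT : Q = f :: Q.tail := by
    cases Q with
    | nil => simp at hQf
    | cons y t => simp at hQf; rw [hQf]; rfl
  have hall' : ∀ y ∈ Q, y ≠ f → y ∉ S := by
    intro y hy hyf hyS
    exact hQt y (mem_tail_of_ne_head hy hQf hyf) (hSD hyS)
  by_cases hxf : x = f
  · subst hxf
    have hall : ∀ y ∈ Q, y ∉ S := by
      intro y hy
      by_cases hyx : y = x
      · subst hyx; exact hxS
      · exact hall' y hy hyx
    exact ⟨path_reaches Q hch hall hQf hlb, hall b (mem_of_getLast?' hlb)⟩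
  · have hxt : x ∈ Q.tail := mem_tail_of_ne_head hx hQf hxf
    obtain ⟨Y₁, Y₂, hYsplit⟩ := List.append_of_mem hxt
    have hQsplit : Q = (f :: Y₁) ++ x :: Y₂ := by
      rw [hQT, hYsplit]; rfl
    have hsuf : (x :: Y₂) <:+ Q := ⟨f :: Y₁, hQsplit.symm⟩
    have hallW : ∀ y ∈ x :: Y₂, y ∉ S := by
      intro y hy hyS
      have : y ∈ Q.tail := by rw [hYsplit]; exact List.mem_append_right _ hy
      exact hQt y this (hSD hyS)
    have hlastW : (x :: Y₂).getLast? = some b := by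
      rw [← hlb, hQsplit, List.getLast?_append_cons]
    exact ⟨path_reaches _ (hch.suffix hsuf) hallW rfl hlastW,
      hallW b (mem_of_getLast?' hlastW)⟩

/-- KEY: a vertex shared by a truncated `A→Du` path and a truncated `Dv→B` path must be
both endpoints, otherwise we could cross `S` in the reduced graph. -/
lemma key_lemma {adj' : V → V → Prop} {A B S Du Dv : Finset V} {P Q : List V} {e f x : V}
    (hSu : S ⊆ Du) (hSv : S ⊆ Dv)
    (hS : IsVertexCut adj' A B S)
    (hP : IsPathFrom adj' A Du P) (hPd : ∀ y ∈ P.dropLast, y ∉ Du)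
    (hQ : IsPathFrom adj' Dv B Q) (hQt : ∀ y ∈ Q.tail, y ∉ Dv)
    (hPe : P.getLast? = some e) (hQf : Q.head? = some f)
    (hx : x ∈ P) (hx' : x ∈ Q) : x = e ∧ x = f := by
  by_cases h1 : x = e ∧ x = f
  · exact h1
  exfalso
  have hxS : x ∉ S := by
    by_cases h2 : x = e
    · have h3 : x ≠ f := fun hf => h1 ⟨h2, hf⟩
      exact fun hxS => hQt x (mem_tail_of_ne_head hx' hQf h3) (hSv hxS)
    · exact fun hxS => hPd x (mem_dropLast_of_ne_last hx hPe h2) (hSu hxS)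
  obtain ⟨a, haA, hha⟩ := hP.2.2.2.1
  obtain ⟨b, hbB, hlb⟩ := hQ.2.2.2.2
  obtain ⟨hr1, haS⟩ := walkP hSu hP.2.1 hPe hPd hx hxS hha
  obtain ⟨hr2, hbS⟩ := walkQ hSv hQ.2.1 hQf hQt hx' hxS hlb
  exact hS a haA b hbB haS hbS (hr1.trans hr2)
lemma menger_base {adj : V → V → Prop} (hnl : ∀ x y, adj x y → x = y)
    {A B : Finset V} {k : ℕ} (hk : ∀ T, IsVertexCut adj A B T → k ≤ T.card) :
    ∃ Ps : Fin k → List V, (∀ i, IsPathFrom adj A B (Ps i)) ∧ DisjointPaths Ps := by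
  have hreach : ∀ {a b : V} {C : Finset V}, Reaches adj C a b → a = b := by
    intro a b C h
    induction h with
    | refl => rfl
    | tail _ h' ih => exact ih.trans (hnl _ _ h'.1)
  have hcut : IsVertexCut adj A B (A ∩ B) := by
    intro a ha b hb haC _ hr
    obtain rfl := hreach hr
    exact haC (Finset.mem_inter.mpr ⟨ha, hb⟩)
  have hcard := hk _ hcut
  set l := (A ∩ B).toList with hl
  have hlen : k ≤ l.length := by rw [hl, Finset.length_toList]; exact hcard
  refine ⟨fun i => [l.get ⟨i, lt_of_lt_of_le i.2 hlen⟩], ?_, ?_⟩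
  · intro i
    have hc : l.get ⟨i, lt_of_lt_of_le i.2 hlen⟩ ∈ A ∩ B := by
      rw [← Finset.mem_toList]; exact List.get_mem l _
    exact ⟨by simp, List.isChain_singleton _, List.nodup_singleton _,
      ⟨_, (Finset.mem_inter.mp hc).1, rfl⟩, ⟨_, (Finset.mem_inter.mp hc).2, rfl⟩⟩
  · intro i j hij x hx hx'
    simp only [List.mem_singleton] at hx hx'
    subst hx
    have := (Finset.nodup_toList (A ∩ B)).get_inj_iff.mp hx'.symm
    exact hij (by
      have h2 := congrArg Fin.val this
      exact Fin.ext h2.symm)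

noncomputable def edgeSet (adj : V → V → Prop) : Finset (V × V) :=
  @Finset.filter _ (fun p => adj p.1 p.2 ∧ p.1 ≠ p.2)
    (fun p => Classical.propDecidable _) Finset.univ

lemma mem_edgeSet {adj : V → V → Prop} {p : V × V} :
    p ∈ edgeSet adj ↔ adj p.1 p.2 ∧ p.1 ≠ p.2 := by
  simp [edgeSet]

lemma menger : ∀ (n : ℕ) (adj : V → V → Prop) (A B : Finset V) (k : ℕ),
    (edgeSet adj).card ≤ n → (∀ T, IsVertexCut adj A B T → k ≤ T.card) →
    ∃ Ps : Fin k → List V, (∀ i, IsPathFrom adj A B (Ps i)) ∧ DisjointPaths Ps := by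
  intro n
  induction n with
  | zero =>
    intro adj A B k hE hk
    refine menger_base ?_ hk
    intro x y hadj
    by_contra hne
    have : (x, y) ∈ edgeSet adj := mem_edgeSet.mpr ⟨hadj, hne⟩
    have := Finset.card_pos.mpr ⟨_, this⟩
    omega
  | succ n IH =>
    intro adj A B k hE hk
    by_cases hex : ∃ u v, adj u v ∧ u ≠ v
    swap
    · refine menger_base ?_ hk
      intro x y hadj
      by_contra hne
      exact hex ⟨x, y, hadj, hne⟩
    obtain ⟨u, v, huv, hune⟩ := hex
    set adj' := fun x y => adj x y ∧ (x, y) ≠ (u, v) with hadj'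
    have hE' : (edgeSet adj').card ≤ n := by
      have hsub : edgeSet adj' ⊆ (edgeSet adj).erase (u, v) := by
        intro p hp
        rw [mem_edgeSet] at hp
        exact Finset.mem_erase.mpr ⟨hp.1.2, mem_edgeSet.mpr ⟨hp.1.1, hp.2⟩⟩
      have := Finset.card_le_card hsub
      rw [Finset.card_erase_of_mem (mem_edgeSet.mpr ⟨huv, hune⟩)] at this
      omega
    by_cases hT : ∀ T, IsVertexCut adj' A B T → k ≤ T.card
    · obtain ⟨Ps, h1, h2⟩ := IH adj' A B k hE' hT
      exact ⟨Ps, fun i => isPathFrom_mono (fun x y h => h.1) (h1 i), h2⟩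
    push_neg at hT
    obtain ⟨S, hScut, hSk⟩ := hT
    set Du := insert u S with hDu_def
    set Dv := insert v S with hDv_def
    -- Du and Dv are cuts for adj
    have hDu : IsVertexCut adj A B Du := by
      intro a ha b hb haD hbD hr
      refine hScut a ha b hb (fun h => haD (Finset.mem_insert_of_mem h))
        (fun h => hbD (Finset.mem_insert_of_mem h)) ?_
      refine Relation.ReflTransGen.mono (fun x y h => ?_) _ _ hr
      obtain ⟨h1, h2, h3⟩ := h
      refine ⟨⟨h1, fun hp => ?_⟩, fun h => h2 (Finset.mem_insert_of_mem h),
        fun h => h3 (Finset.mem_insert_of_mem h)⟩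
      rw [Prod.mk.injEq] at hp
      exact h2 (hp.1 ▸ Finset.mem_insert_self u S)
    have hDv : IsVertexCut adj A B Dv := by
      intro a ha b hb haD hbD hr
      refine hScut a ha b hb (fun h => haD (Finset.mem_insert_of_mem h))
        (fun h => hbD (Finset.mem_insert_of_mem h)) ?_
      refine Relation.ReflTransGen.mono (fun x y h => ?_) _ _ hr
      obtain ⟨h1, h2, h3⟩ := h
      refine ⟨⟨h1, fun hp => ?_⟩, fun h => h2 (Finset.mem_insert_of_mem h),
        fun h => h3 (Finset.mem_insert_of_mem h)⟩
      rw [Prod.mk.injEq] at hp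
      exact h3 (hp.2 ▸ Finset.mem_insert_self v S)
    have hkDu := hk _ hDu
    have hkDv := hk _ hDv
    have hcardDu : Du.card = k :=
      le_antisymm (le_trans (Finset.card_insert_le u S) (by omega)) hkDu
    have hcardDv : Dv.card = k :=
      le_antisymm (le_trans (Finset.card_insert_le v S) (by omega)) hkDv
    have hu : u ∉ S := by
      intro h
      rw [hDu_def, Finset.insert_eq_self.mpr h] at hcardDu
      omega
    have hv : v ∉ S := by
      intro h
      rw [hDv_def, Finset.insert_eq_self.mpr h] at hcardDv
      omega
    have hvDu : v ∉ Du := by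
      simp only [hDu_def, Finset.mem_insert]
      push_neg
      exact ⟨fun h => hune h.symm, hv⟩
    -- cut bounds for the two reduced problems
    have hcutADu : ∀ T, IsVertexCut adj' A Du T → k ≤ T.card := by
      intro T hT'
      apply hk
      intro a ha b hb haT hbT hr
      rcases reach_first (D := Du) hbT hr with ⟨haD, hbD, hr2⟩ | ⟨c, hcD, hcT, hr2⟩
      · exact hDu a ha b hb haD hbD
          (reaches_mono (fun _ _ h => h) Finset.subset_union_right hr2)
      · refine hT' a ha c hcD haT hcT ?_
        refine Relation.ReflTransGen.mono (fun x y h => ?_) _ _ hr2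
        obtain ⟨h1, h2, h3⟩ := h
        refine ⟨⟨h1, fun hp => ?_⟩, fun h => h2 (Finset.mem_union_left _ h), h3⟩
        rw [Prod.mk.injEq] at hp
        exact h2 (Finset.mem_union_right _ (hp.1 ▸ Finset.mem_insert_self u S))
    have hcutDvB : ∀ T, IsVertexCut adj' Dv B T → k ≤ T.card := by
      intro T hT'
      apply hk
      intro a ha b hb haT hbT hr
      rcases reach_last (D := Dv) haT hr with ⟨haD, hbD, hr2⟩ | ⟨c, hcD, hcT, hr2⟩
      · exact hDv a ha b hb haD hbD
          (reaches_mono (fun _ _ h => h) Finset.subset_union_right hr2)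
      · refine hT' c hcD b hb hcT hbT ?_
        refine Relation.ReflTransGen.mono (fun x y h => ?_) _ _ hr2
        obtain ⟨h1, h2, h3⟩ := h
        refine ⟨⟨h1, fun hp => ?_⟩, h2, fun h => h3 (Finset.mem_union_left _ h)⟩
        rw [Prod.mk.injEq] at hp
        exact h3 (Finset.mem_union_right _ (hp.2 ▸ Finset.mem_insert_self v S))
    obtain ⟨Ps0, hPs0, hPdisj0⟩ := IH adj' A Du k hE' hcutADu
    obtain ⟨Qs0, hQs0, hQdisj0⟩ := IH adj' Dv B k hE' hcutDvB
    choose P' hP' hP'sub hP'drop using fun i => truncate_P (hPs0 i)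
    choose Q' hQ' hQ'sub hQ'tail using fun j => truncate_Q (hQs0 j)
    have hPdisj : ∀ i j, i ≠ j → (P' i).Disjoint (P' j) :=
      fun i j hij x hx hx' => hPdisj0 i j hij (hP'sub i x hx) (hP'sub j x hx')
    have hQdisj : ∀ i j, i ≠ j → (Q' i).Disjoint (Q' j) :=
      fun i j hij x hx hx' => hQdisj0 i j hij (hQ'sub i x hx) (hQ'sub j x hx')
    choose e he hePe using fun i => (hP' i).2.2.2.2
    choose f hf hfQf using fun j => (hQ' j).2.2.2.1
    have einj : Function.Injective e := by
      intro i j hij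
      by_contra hne
      exact hPdisj i j hne (mem_of_getLast?' (hePe i))
        (hij ▸ mem_of_getLast?' (hePe j))
    have finj : Function.Injective f := by
      intro i j hij
      by_contra hne
      exact hQdisj i j hne (mem_of_head?' (hfQf i))
        (hij ▸ mem_of_head?' (hfQf j))
    have fsurj : ∀ d ∈ Dv, ∃ j, f j = d := by
      intro d hd
      have himg : Finset.univ.image f = Dv := by
        apply Finset.eq_of_subset_of_card_le
        · intro x hx
          obtain ⟨j, _, rfl⟩ := Finset.mem_image.mp hx
          exact hf j
        · rw [Finset.card_image_of_injective _ finj, Finset.card_univ,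
            Fintype.card_fin, hcardDv]
      rw [← himg] at hd
      obtain ⟨j, _, hj⟩ := Finset.mem_image.mp hd
      exact ⟨j, hj⟩
    have htarget : ∀ i, (if e i = u then v else e i) ∈ Dv := by
      intro i
      split
      · exact Finset.mem_insert_self v S
      · next h =>
        rcases Finset.mem_insert.mp (he i) with h' | h'
        · exact absurd h' h
        · exact Finset.mem_insert_of_mem h'
    choose σ hσ using fun i => fsurj _ (htarget i)
    have hσinj : Function.Injective σ := by
      intro i j hij
      apply einj
      have hfeq := congrArg f hij
      rw [hσ i, hσ j] at hfeq
      split_ifs at hfeq with h1 h2 h2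
      · exact h1.trans h2.symm
      · exact absurd (hfeq ▸ he j) hvDu
      · exact absurd (hfeq ▸ he i) hvDu
      · exact hfeq
    set Y : Fin k → List V := fun i => if e i = u then Q' (σ i) else (Q' (σ i)).tail
      with hY_def
    have hkey : ∀ i j x, x ∈ P' i → x ∈ Q' j → x = e i ∧ x = f j :=
      fun i j x hx hx' => key_lemma (Finset.subset_insert u S) (Finset.subset_insert v S)
        hScut (hP' i) (hP'drop i) (hQ' j) (hQ'tail j) (hePe i) (hfQf j) hx hx'
    have hYQ : ∀ i x, x ∈ Y i → x ∈ Q' (σ i) := by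
      intro i x hx
      rw [hY_def] at hx
      simp only at hx
      split at hx
      · exact hx
      · exact List.mem_of_mem_tail hx
    have hQdecomp : ∀ j, Q' j = f j :: (Q' j).tail := by
      intro j
      cases hQ'' : Q' j with
      | nil => exact absurd hQ'' (hQ' j).1
      | cons y t =>
        have := hfQf j
        rw [hQ''] at this
        simp at this
        rw [this]
        rfl
    have hPY : ∀ i j x, x ∈ P' i → x ∈ Y j → False := by
      intro i j x hx hy
      obtain ⟨hxe, hxf⟩ := hkey i (σ j) x hx (hYQ j x hy)
      by_cases hej : e j = u
      · have hxv : x = v := by rw [hxf, hσ j, if_pos hej]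
        exact hvDu (hxv ▸ hxe ▸ he i)
      · have hyt : x ∈ (Q' (σ j)).tail := by
          rw [hY_def] at hy; simp only at hy; rw [if_neg hej] at hy; exact hy
        have hnd := (hQ' (σ j)).2.2.1
        rw [hQdecomp (σ j)] at hnd
        have hxfj : x = f (σ j) := by rw [hxf, hσ j, if_neg hej]
        exact (List.nodup_cons.mp hnd).1 (hxfj ▸ hyt)
    refine ⟨fun i => P' i ++ Y i, ?_, ?_⟩
    · intro i
      obtain ⟨hne, hch, hnd, ⟨a, haA, hha⟩, _⟩ := hP' i
      have hYchain : (Y i).Chain' adj := by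
        rw [hY_def]
        simp only
        split
        · exact (hQ' (σ i)).2.1.imp (fun x y h => h.1)
        · exact ((hQ' (σ i)).2.1.tail).imp (fun x y h => h.1)
      refine ⟨by simp [hne], ?_, ?_, ⟨a, haA, ?_⟩, ?_⟩
      · rw [List.Chain', List.isChain_append]
        refine ⟨hch.imp (fun x y h => h.1), hYchain, ?_⟩
        intro x hx y hy
        rw [hePe i] at hx
        simp only [Option.mem_def, Option.some_inj] at hx
        subst hx
        rw [hY_def] at hy
        simp only at hy
        by_cases hei : e i = u
        · rw [if_pos hei] at hy
          rw [hfQf (σ i)] at hy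
          simp only [Option.mem_def, Option.some_inj] at hy
          have : f (σ i) = v := by rw [hσ i, if_pos hei]
          rw [hy] at this
          rw [hei, this]
          exact huv
        · rw [if_neg hei] at hy
          have hchQ := (hQ' (σ i)).2.1
          rw [hQdecomp (σ i), List.Chain', List.isChain_cons] at hchQ
          have := hchQ.1 y hy
          have hfe : f (σ i) = e i := by rw [hσ i, if_neg hei]
          rw [hfe] at this
          exact this.1
      · rw [List.nodup_append]
        refine ⟨hnd, ?_, fun x hx y hy hxy => hPY i i x hx (hxy ▸ hy)⟩
        rw [hY_def]; simp only
        split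
        · exact (hQ' (σ i)).2.2.1
        · exact (hQ' (σ i)).2.2.1.sublist (List.tail_sublist _)
      · rw [List.head?_append, hha]; rfl
      · rw [List.getLast?_append]
        by_cases hei : e i = u
        · obtain ⟨b, hbB, hlb⟩ := (hQ' (σ i)).2.2.2.2
          refine ⟨b, hbB, ?_⟩
          have : (Y i).getLast? = some b := by rw [hY_def]; simp only; rw [if_pos hei]; exact hlb
          rw [this]; rfl
        · cases htail : (Q' (σ i)).tail with
          | nil =>
            have hYnil : Y i = [] := by rw [hY_def]; simp only; rw [if_neg hei]; exact htail
            obtain ⟨b, hbB, hlb⟩ := (hQ' (σ i)).2.2.2.2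
            have hQsing : Q' (σ i) = [f (σ i)] := by rw [hQdecomp (σ i), htail]
            rw [hQsing] at hlb
            simp at hlb
            have hfe : f (σ i) = e i := by rw [hσ i, if_neg hei]
            refine ⟨e i, ?_, ?_⟩
            · rw [← hfe, hlb]; exact hbB
            · rw [hYnil]; simp [hePe i]
          | cons z t =>
            obtain ⟨b, hbB, hlb⟩ := (hQ' (σ i)).2.2.2.2
            refine ⟨b, hbB, ?_⟩
            have h1 : (Y i).getLast? = (Q' (σ i)).getLast? := by
              rw [hY_def]; simp only; rw [if_neg hei]
              conv_rhs => rw [hQdecomp (σ i)]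
              rw [htail, List.getLast?_cons_cons]
            rw [h1, hlb]; rfl
    · intro i j hij x hx hx'
      rcases List.mem_append.mp hx with h1 | h1 <;>
        rcases List.mem_append.mp hx' with h2 | h2
      · exact hPdisj i j hij h1 h2
      · exact hPY i j x h1 h2
      · exact hPY j i x h2 h1
      · exact hQdisj (σ i) (σ j) (fun h => hij (hσinj h)) (hYQ i x h1) (hYQ j x h2)

end MengerAux

/-- if `C` is a minimum vertex cut of size `k` between disjoint sets `A` and
`B` in a directed graph, then there are `k` pairwise vertex-disjoint paths from `A` to `C`
(ending at distinct vertices of `C`), and `k` pairwise vertex-disjoint paths from `C` to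
`B` (starting at distinct vertices of `C`). -/
theorem stmt9 {V : Type*} [Fintype V] [DecidableEq V] (adj : V → V → Prop)
    (A B C : Finset V) (hAB : Disjoint A B)
    (hcut : IsVertexCut adj A B C)
    (hmin : ∀ C' : Finset V, IsVertexCut adj A B C' → C.card ≤ C'.card) :
    (∃ Ps : Fin C.card → List V,
      (∀ i, IsPathFrom adj A C (Ps i)) ∧ DisjointPaths Ps ∧
        Function.Injective (fun i => (Ps i).getLast?)) ∧
    (∃ Qs : Fin C.card → List V,
      (∀ i, IsPathFrom adj C B (Qs i)) ∧ DisjointPaths Qs ∧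
        Function.Injective (fun i => (Qs i).head?)) := by
  constructor
  · have hACcut : ∀ C', IsVertexCut adj A C C' → C.card ≤ C'.card := by
      intro C' hC'
      apply hmin
      intro a ha b hb haC' hbC' hr
      rcases MengerAux.reach_first (D := C) hbC' hr with ⟨haD, hbD, hr2⟩ | ⟨c, hcC, hcC', hr2⟩
      · exact hcut a ha b hb haD hbD
          (MengerAux.reaches_mono (fun _ _ h => h) Finset.subset_union_right hr2)
      · exact hC' a ha c hcC haC' hcC'
          (Relation.ReflTransGen.mono
            (fun x y h => ⟨h.1, fun h' => h.2.1 (Finset.mem_union_left _ h'), h.2.2⟩) _ _ hr2)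
    obtain ⟨Ps, h1, h2⟩ :=
      MengerAux.menger (MengerAux.edgeSet adj).card adj A C C.card le_rfl hACcut
    refine ⟨Ps, h1, h2, ?_⟩
    intro i j hij
    simp only at hij
    by_contra hne
    obtain ⟨b, _, hb⟩ := (h1 i).2.2.2.2
    exact h2 i j hne (MengerAux.mem_of_getLast?' hb)
      (MengerAux.mem_of_getLast?' (hij ▸ hb))
  · have hCBcut : ∀ C', IsVertexCut adj C B C' → C.card ≤ C'.card := by
      intro C' hC'
      apply hmin
      intro a ha b hb haC' hbC' hr
      rcases MengerAux.reach_last (D := C) haC' hr with ⟨haD, hbD, hr2⟩ | ⟨c, hcC, hcC', hr2⟩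
      · exact hcut a ha b hb haD hbD
          (MengerAux.reaches_mono (fun _ _ h => h) Finset.subset_union_right hr2)
      · exact hC' c hcC b hb hcC' hbC'
          (Relation.ReflTransGen.mono
            (fun x y h => ⟨h.1, h.2.1, fun h' => h.2.2 (Finset.mem_union_left _ h')⟩) _ _ hr2)
    obtain ⟨Qs, h1, h2⟩ :=
      MengerAux.menger (MengerAux.edgeSet adj).card adj C B C.card le_rfl hCBcut
    refine ⟨Qs, h1, h2, ?_⟩
    intro i j hij
    simp only at hij
    by_contra hne
    obtain ⟨a, _, ha⟩ := (h1 i).2.2.2.1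
    exact h2 i j hne (MengerAux.mem_of_head?' ha)
      (MengerAux.mem_of_head?' (hij ▸ ha))
end

section
/- Let $K$ be a clique on $2c$ vertices inside a graph $G$ such that all vertices of $K$ have identical neighborhoods outside $K$. Then no vertex cut of size at most $c$ between two vertices $a, b \notin K$ contains any vertex of $K$ unless it contains all of $K$; in particular, any minimal vertex cut of size at most $c$ between $a$ and $b$ is disjoint from $K$. -/
/-- `C ⊆ V ∖ {a, b}` is a vertex cut between the vertices `a` and `b`. -/
def IsVertexCutPair {V : Type*} (adj : V → V → Prop) (a b : V) (C : Finset V) : Prop :=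
  a ∉ C ∧ b ∉ C ∧ ¬ Reaches adj C a b

/-- let `K` be a clique on `2c` vertices in a graph `G` such that all
vertices of `K` have identical neighborhoods outside `K`.  Then a vertex cut of size at
most `c` between `a, b ∉ K` cannot contain a vertex of `K` without containing all of `K`
(which is impossible since `|K| = 2c > c`); in particular, any minimal vertex cut of size
at most `c` between `a` and `b` is disjoint from `K`. -/
theorem stmt10 {V : Type*} [Fintype V] [DecidableEq V] (adj : V → V → Prop)
    (hsymm : ∀ u v, adj u v ↔ adj v u) (c : ℕ) (K : Finset V)
    (hKcard : K.card = 2 * c)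
    (hclique : ∀ u ∈ K, ∀ v ∈ K, u ≠ v → adj u v)
    (hnbhd : ∀ u ∈ K, ∀ v ∈ K, ∀ x ∉ K, adj u x ↔ adj v x)
    (a b : V) (ha : a ∉ K) (hb : b ∉ K) (hab : a ≠ b)
    (C : Finset V) (hcut : IsVertexCutPair adj a b C) (hsize : C.card ≤ c)
    (hminimal : ∀ C' ⊆ C, IsVertexCutPair adj a b C' → C' = C) :
    Disjoint C K := by
  by_contra hdisj
  obtain ⟨k, hkC, hkK⟩ := Finset.not_disjoint_iff.mp hdisj
  -- C is nonempty, so c ≥ 1, so |K| = 2c > c ≥ |C|, so ∃ w ∈ K \ C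
  have hc1 : 1 ≤ c := by
    rcases Nat.eq_zero_or_pos c with h | h
    · exact absurd (Finset.card_eq_zero.mp (Nat.le_zero.mp (h ▸ hsize)) ▸ hkC)
        (Finset.notMem_empty k)
    · exact h
  have hKC : ¬ K ⊆ C := fun h => by
    have := Finset.card_le_card h
    omega
  obtain ⟨w, hwK, hwC⟩ := Finset.not_subset.mp hKC
  -- the smaller set C \ K is still a cut
  set C' := C \ K with hC'
  have hsub : C' ⊆ C := Finset.sdiff_subset
  have hne : C' ≠ C := fun h => by
    have : k ∈ C' := h ▸ hkC
    exact (Finset.mem_sdiff.mp this).2 hkK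
  apply hne
  apply hminimal C' hsub
  refine ⟨fun h => hcut.1 (hsub h), fun h => hcut.2.1 (hsub h), fun hre => ?_⟩
  apply hcut.2.2
  -- reroute through w : map x to w if x ∈ K
  classical
  set f : V → V := fun x => if x ∈ K then w else x with hf
  have hfnot : ∀ x, (x ∉ C') → f x ∉ C := by
    intro x hx
    by_cases hxK : x ∈ K
    · simpa [hf, hxK] using hwC
    · simp only [hf, if_neg hxK]
      intro hxC
      exact hx (Finset.mem_sdiff.mpr ⟨hxC, hxK⟩)
  have key : ∀ x y, (adj x y ∧ x ∉ C' ∧ y ∉ C') →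
      Relation.ReflTransGen (fun u v => adj u v ∧ u ∉ C ∧ v ∉ C) (f x) (f y) := by
    intro x y ⟨hadj, hx, hy⟩
    have hfx := hfnot x hx
    have hfy := hfnot y hy
    by_cases hxK : x ∈ K <;> by_cases hyK : y ∈ K
    · simp only [hf, if_pos hxK, if_pos hyK]
      exact Relation.ReflTransGen.refl
    · have h1 : adj w y := (hnbhd x hxK w hwK y hyK).mp hadj
      refine Relation.ReflTransGen.single ?_
      simp only [hf, if_pos hxK, if_neg hyK] at *
      exact ⟨h1, hfx, hfy⟩
    · have h1 : adj x w := (hsymm w x).mp ((hnbhd y hyK w hwK x hxK).mp ((hsymm x y).mp hadj))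
      refine Relation.ReflTransGen.single ?_
      simp only [hf, if_neg hxK, if_pos hyK] at *
      exact ⟨h1, hfx, hfy⟩
    · refine Relation.ReflTransGen.single ?_
      simp only [hf, if_neg hxK, if_neg hyK] at *
      exact ⟨hadj, hfx, hfy⟩
  have hmap : Relation.ReflTransGen (fun u v => adj u v ∧ u ∉ C ∧ v ∉ C) (f a) (f b) :=
    Relation.ReflTransGen.lift' f key a b hre
  show Reaches adj C a b
  unfold Reaches
  simpa [hf, ha, hb] using hmap
end

section
/- Suppose a sequence of splits is applied to a piece with $T$ terminals, where each split removes a smaller side with $t_i$ terminals from the larger side and adds at most $2\phi\sigma t_i$ new terminals (to both pieces combined), with $\phi\sigma \le \frac{1}{10 \log n}$, and the larger side loses at least $t_i - \phi\sigma t_i \ge 4t_i/5$ terminals per split, continuing until the largest piece has at most $2T/3$ terminals. Then $\sum_i t_i \le 5T/4$, and the total number of new terminals added is at most $T/(4\log n)$. Consequently, after recursion of depth at most $\log_{3/2} n$, the total terminal count is at most $(1 + \frac{1}{4\log n})^{\log_{3/2} n} \cdot T = O(T)$. -/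
/-- charging argument for the expander-decomposition-style partition.  A
piece starting with `T` terminals undergoes splits; the `i`-th split removes a smaller
side with `t i` terminals, the larger side losing at least `(4/5) t i` terminals, and at
most `2φσ·(t i)` new terminals are created, where `φσ ≤ 1/(10 log n)`.  Then
`∑ᵢ t i ≤ 5T/4`, the total number of new terminals is at most `T/(4 log n)`, and the
recursion (of depth `log_{3/2} n`) blows the terminal count up by at most the factor
`(1 + 1/(4 log n))^{log_{3/2} n} ≤ 2`, i.e. `O(T)` terminals overall. -/
theorem stmt12 (n : ℝ) (hn : 2 ≤ n) (T : ℝ) (hT : 0 ≤ T)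
    (φ σ : ℝ) (hφσ0 : 0 ≤ φ * σ) (hφσ : φ * σ ≤ 1 / (10 * Real.logb 2 n))
    (j : ℕ) (t : Fin j → ℝ) (ht : ∀ i, 0 ≤ t i)
    (L : Fin (j + 1) → ℝ) (hL0 : L 0 = T) (hLnonneg : ∀ i, 0 ≤ L i)
    (hdec : ∀ i : Fin j, L i.succ ≤ L i.castSucc - (4 / 5) * t i) :
    (∑ i, t i ≤ 5 * T / 4) ∧
    (∑ i, 2 * (φ * σ) * t i ≤ T / (4 * Real.logb 2 n)) ∧
    (1 + 1 / (4 * Real.logb 2 n)) ^ (Real.logb (3 / 2) n) * T ≤ 2 * T := by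
  have hLpos : 0 < Real.logb 2 n := Real.logb_pos (by norm_num) (by linarith)
  -- telescoping
  set t' : ℕ → ℝ := fun i => if h : i < j then t ⟨i, h⟩ else 0 with ht'
  set L' : ℕ → ℝ := fun i => if h : i < j + 1 then L ⟨i, h⟩ else 0 with hL'
  have key : ∀ k, k ≤ j → (4 / 5) * ∑ i ∈ Finset.range k, t' i ≤ L' 0 - L' k := by
    intro k hk
    induction k with
    | zero => simp
    | succ m ih =>
      have hm : m < j := hk
      have hd := hdec ⟨m, hm⟩
      have h1 : L' (m + 1) = L (⟨m, hm⟩ : Fin j).succ := by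
        simp [hL', Nat.succ_lt_succ hm, Fin.succ, hm]
      have h2 : L' m = L (⟨m, hm⟩ : Fin j).castSucc := by
        simp [hL', Nat.lt_succ_of_lt hm, Fin.castSucc, Fin.castAdd, Fin.castLE, hm.le]
      have h3 : t' m = t ⟨m, hm⟩ := by simp [ht', hm]
      have := ih (le_of_lt hm)
      rw [Finset.sum_range_succ]
      rw [h1, h2] at *
      rw [h3]
      linarith
  have hsum : ∑ i, t i = ∑ i ∈ Finset.range j, t' i := by
    rw [← Fin.sum_univ_eq_sum_range]
    apply Finset.sum_congr rfl
    intro i _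
    simp [ht', i.isLt]
  have hL'0 : L' 0 = T := by simp [hL', hL0]
  have hL'j : 0 ≤ L' j := by
    simp only [hL', Nat.lt_succ_self, dif_pos]
    exact hLnonneg _
  have hkey := key j le_rfl
  have hS : ∑ i, t i ≤ 5 * T / 4 := by rw [hsum]; linarith [hL'0 ▸ hkey]
  have hSnn : 0 ≤ ∑ i, t i := Finset.sum_nonneg fun i _ => ht i
  refine ⟨hS, ?_, ?_⟩
  · have h1 : ∑ i, 2 * (φ * σ) * t i = 2 * (φ * σ) * ∑ i, t i := by
      rw [Finset.mul_sum]
    rw [h1]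
    have hc : 0 < 1 / Real.logb 2 n := by positivity
    have hφσ' : φ * σ ≤ (1 / Real.logb 2 n) / 10 := by
      rw [one_div, div_eq_mul_inv, ← mul_inv]
      calc φ * σ ≤ 1 / (10 * Real.logb 2 n) := hφσ
        _ = (Real.logb 2 n * 10)⁻¹ := by rw [one_div, mul_comm]
    have hgoal : T / (4 * Real.logb 2 n) = (1 / Real.logb 2 n) * T / 4 := by
      rw [one_div, div_eq_mul_inv T, mul_inv]; ring
    rw [hgoal]
    nlinarith [mul_le_mul_of_nonneg_right hφσ' hSnn,
      mul_le_mul_of_nonneg_left hS hc.le]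
  · -- (1 + 1/(4 log n))^(logb (3/2) n) ≤ 2
    have hlog32 : (1:ℝ) / 4 ≤ Real.log (3 / 2) := by
      rw [Real.le_log_iff_exp_le (by norm_num)]
      nlinarith [Real.exp_one_lt_d9, Real.exp_pos (1/4 : ℝ),
        Real.exp_pos (1/2 : ℝ),
        sq_nonneg (Real.exp (1/4) - 5/4),
        Real.exp_add (1/4 : ℝ) (1/4), Real.exp_add (1/2 : ℝ) (1/2)]
    have hlogn : 0 < Real.log n := Real.log_pos (by linarith)
    have hlog2 : 0 < Real.log 2 := Real.log_pos (by norm_num)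
    have hlog32pos : 0 < Real.log (3 / 2) := by linarith
    set x : ℝ := 1 / (4 * Real.logb 2 n) with hx
    have hxpos : 0 < x := by positivity
    set M : ℝ := Real.logb (3 / 2) n with hM
    have hMpos : 0 < M := Real.logb_pos (by norm_num) (by linarith)
    have h1 : (1 + x) ^ M ≤ Real.exp x ^ M := by
      apply Real.rpow_le_rpow (by positivity) _ hMpos.le
      linarith [Real.add_one_le_exp x]
    have h2 : Real.exp x ^ M = Real.exp (x * M) := by
      rw [Real.rpow_def_of_pos (Real.exp_pos x), Real.log_exp]
    have hxM : x * M = Real.log 2 / (4 * Real.log (3 / 2)) := by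
      rw [hx, hM, Real.logb, Real.logb]
      field_simp
    have h3 : x * M ≤ Real.log 2 := by
      rw [hxM]
      rw [div_le_iff₀ (by positivity)]
      nlinarith
    have h4 : (1 + x) ^ M ≤ 2 := by
      calc (1 + x) ^ M ≤ Real.exp (x * M) := h2 ▸ h1
        _ ≤ Real.exp (Real.log 2) := Real.exp_le_exp.mpr h3
        _ = 2 := Real.exp_log (by norm_num)
    nlinarith [mul_le_mul_of_nonneg_right h4 hT]
end

section
/- Let $G$ be a graph with terminal set $\mathcal{T}$ and let $F \subseteq E(G)$ cover all $c$-cuts. Let $H$ be obtained from $G$ by contracting every edge not in $F$. Then $H$ is $(\mathcal{T}, c)$-equivalent to $G$, and $|E(H)| \le |F|$. -/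
open Finset

/-- A multigraph is given by an edge type `E` and an endpoint map `ε : E → V × V`.
`eCut ε S` is the set of edges with exactly one endpoint in `S`. -/
def eCut {V E : Type*} [Fintype E] [DecidableEq V] (ε : E → V × V) (S : Finset V) :
    Finset E :=
  univ.filter (fun e => ((ε e).1 ∈ S ∧ (ε e).2 ∉ S) ∨ ((ε e).1 ∉ S ∧ (ε e).2 ∈ S))

/-- Minimum number of edges in a cut separating `A` from `B` (`⊤` if no such cut exists,
e.g. if `A` and `B` intersect). -/
noncomputable def mincutE {V E : Type*} [Fintype E] [DecidableEq V]
    (ε : E → V × V) (A B : Finset V) : ℕ∞ :=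
  sInf {n : ℕ∞ | ∃ S : Finset V, A ⊆ S ∧ Disjoint B S ∧ ((eCut ε S).card : ℕ∞) = n}

/-- `F` covers all `c`-cuts: for every terminal side `S ⊆ 𝒯` whose mincut is at most `c`,
some minimum cut between `S` and `𝒯 ∖ S` consists solely of edges of `F`. -/
def CoversAll {V E : Type*} [Fintype E] [DecidableEq V] [DecidableEq E]
    (c : ℕ) (ε : E → V × V) (𝒯 : Finset V) (F : Finset E) : Prop :=
  ∀ S ⊆ 𝒯, mincutE ε S (𝒯 \ S) ≤ (c : ℕ∞) →
    ∃ S' : Finset V, S ⊆ S' ∧ Disjoint (𝒯 \ S) S' ∧ eCut ε S' ⊆ F ∧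
      ((eCut ε S').card : ℕ∞) = mincutE ε S (𝒯 \ S)

section Helpers

variable {V E V' : Type*} [Fintype V] [Fintype E] [DecidableEq V] [DecidableEq E]
    [Fintype V'] [DecidableEq V']
    (ε : E → V × V) (F : Finset E) (f : V → V')

/-- Key: the preimage of a cut in H is a cut in G whose edge set is exactly the
underlying edges of the H-cut. -/
private lemma cut_preimage
    (hf : ∀ a b : V, f a = f b ↔
      Relation.EqvGen (fun u v => ∃ e ∉ F, ε e = (u, v) ∨ ε e = (v, u)) a b)
    (εH : F → V' × V') (hεH : ∀ e : F, εH e = (f (ε e.1).1, f (ε e.1).2))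
    (S' : Finset V') :
    eCut ε (univ.filter fun v => f v ∈ S') = (eCut εH S').image Subtype.val := by
  ext e
  simp only [eCut, mem_filter, mem_univ, true_and, mem_image]
  constructor
  · intro h
    have heF : e ∈ F := by
      by_contra heF
      have hfe : f (ε e).1 = f (ε e).2 :=
        (hf _ _).mpr (Relation.EqvGen.rel _ _ ⟨e, heF, Or.inl rfl⟩)
      rcases h with ⟨h1, h2⟩ | ⟨h1, h2⟩
      · exact h2 (hfe ▸ h1)
      · exact h1 (hfe ▸ h2)
    refine ⟨⟨e, heF⟩, ?_, rfl⟩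
    simpa [hεH] using h
  · rintro ⟨⟨e', he'⟩, hmem, rfl⟩
    simpa [hεH] using hmem

/-- Saturation: a cut all of whose edges lie in `F` is a union of fibers of `f`. -/
private lemma saturated
    (hf : ∀ a b : V, f a = f b ↔
      Relation.EqvGen (fun u v => ∃ e ∉ F, ε e = (u, v) ∨ ε e = (v, u)) a b)
    (S' : Finset V) (hcut : eCut ε S' ⊆ F)
    {u v : V} (hu : u ∈ S') (huv : f u = f v) : v ∈ S' := by
  have hgen := (hf u v).mp huv
  have key : ∀ a b, Relation.EqvGen
      (fun u v => ∃ e ∉ F, ε e = (u, v) ∨ ε e = (v, u)) a b → (a ∈ S' ↔ b ∈ S') := by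
    intro a b hab
    induction hab with
    | rel a b hab =>
      obtain ⟨e, heF, h | h⟩ := hab <;>
      · have hne : e ∉ eCut ε S' := fun hc => heF (hcut hc)
        simp only [eCut, mem_filter, mem_univ, true_and, h] at hne
        tauto
    | refl => exact Iff.rfl
    | symm _ _ _ ih => exact ih.symm
    | trans _ _ _ _ _ ih1 ih2 => exact ih1.trans ih2
  exact (key u v hgen).mp hu

end Helpers

/-- let `F ⊆ E(G)` cover all `c`-cuts of `G` with respect to `𝒯`, and let `H`
be obtained from `G` by contracting every edge not in `F`.  Contraction is modelled by a
surjection `f : V → V'` whose fibers are exactly the classes of the equivalence relation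
generated by the edges outside `F`; the edges of `H` are the edges of `F` with their mapped
endpoints.  Then `H` is `(𝒯, c)`-equivalent to `G`, and `|E(H)| ≤ |F|`. -/
theorem stmt14 {V E V' : Type*} [Fintype V] [Fintype E] [DecidableEq V] [DecidableEq E]
    [Fintype V'] [DecidableEq V']
    (ε : E → V × V) (𝒯 : Finset V) (c : ℕ) (F : Finset E)
    (hF : CoversAll c ε 𝒯 F)
    (f : V → V') (hsurj : Function.Surjective f)
    (hf : ∀ a b : V, f a = f b ↔
      Relation.EqvGen (fun u v => ∃ e ∉ F, ε e = (u, v) ∨ ε e = (v, u)) a b)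
    (εH : F → V' × V') (hεH : ∀ e : F, εH e = (f (ε e.1).1, f (ε e.1).2)) :
    (∀ S ⊆ 𝒯, min (mincutE ε S (𝒯 \ S)) (c : ℕ∞) =
        min (mincutE εH (S.image f) ((𝒯 \ S).image f)) (c : ℕ∞)) ∧
      Fintype.card F ≤ F.card := by
  refine ⟨?_, le_of_eq (Fintype.card_coe F)⟩
  intro S hS
  -- Direction 1: mincut in G ≤ mincut in H
  have h1 : mincutE ε S (𝒯 \ S) ≤ mincutE εH (S.image f) ((𝒯 \ S).image f) := by
    apply le_sInf
    rintro n ⟨S', hA, hB, rfl⟩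
    apply sInf_le
    refine ⟨univ.filter fun v => f v ∈ S', ?_, ?_, ?_⟩
    · intro v hv
      simp only [mem_filter, mem_univ, true_and]
      exact hA (mem_image_of_mem f hv)
    · rw [Finset.disjoint_left]
      intro t ht hmem
      simp only [mem_filter, mem_univ, true_and] at hmem
      exact Finset.disjoint_left.mp hB (mem_image_of_mem f ht) hmem
    · rw [cut_preimage ε F f hf εH hεH S',
        card_image_of_injective _ Subtype.val_injective]
  by_cases hc : mincutE ε S (𝒯 \ S) ≤ (c : ℕ∞)
  · -- use the covering cut
    obtain ⟨S', hSS', hdis, hFsub, hcard⟩ := hF S hS hc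
    have hpre : (univ.filter fun v => f v ∈ S'.image f) = S' := by
      ext v
      simp only [mem_filter, mem_univ, true_and, mem_image]
      constructor
      · rintro ⟨u, hu, huv⟩
        exact saturated ε F f hf S' hFsub hu huv
      · intro hv; exact ⟨v, hv, rfl⟩
    have h2 : mincutE εH (S.image f) ((𝒯 \ S).image f) ≤ mincutE ε S (𝒯 \ S) := by
      rw [← hcard]
      apply sInf_le
      refine ⟨S'.image f, image_subset_image hSS', ?_, ?_⟩
      · rw [Finset.disjoint_left]
        rintro x hx hx'
        simp only [mem_image] at hx hx'
        obtain ⟨t, ht, rfl⟩ := hx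
        obtain ⟨s, hs, hst⟩ := hx'
        exact Finset.disjoint_left.mp hdis ht
          (saturated ε F f hf S' hFsub hs hst)
      · have := cut_preimage ε F f hf εH hεH (S'.image f)
        rw [hpre] at this
        rw [← card_image_of_injective (eCut εH (S'.image f)) Subtype.val_injective, ← this]
    rw [le_antisymm h1 h2]
  · push_neg at hc
    rw [min_eq_right hc.le, min_eq_right (le_trans hc.le h1)]
end
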